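/- Let w ∈ S_n and let (i,j) ∈ [n]² with j ≠ w(i). Then there exists u ≤ w in Bruhat order with u(i) = j if and only if (i,j) is sandwiched by an inversion of w, i.e., there exist k < l with w(k) > w(l), k ≤ i ≤ l, and w(l) ≤ j ≤ w(k). -/

import Mathlib

open Equiv Finset
open scoped Classical

/-- Bruhat order on the symmetric group on `Fin n`, via the rank-matrix
characterization: `v ≤ w` iff every northeast corner count of `v` is at most
that of `w`. -/
def bruhatLE {n : ℕ} (v w : Equiv.Perm (Fin n)) : Prop :=
  ∀ i j : Fin n,
    (Finset.univ.filter fun k => k ≤ i ∧ j ≤ v k).card ≤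
      (Finset.univ.filter fun k => k ≤ i ∧ j ≤ w k).card

/-- Coxeter length = number of inversions. -/
def len {n : ℕ} (v : Equiv.Perm (Fin n)) : ℕ :=
  (Finset.univ.filter fun p : Fin n × Fin n => p.1 < p.2 ∧ v p.2 < v p.1).card

/-- The graph of the Bruhat interval `[v, w]`. -/
def grInt {n : ℕ} (v w : Equiv.Perm (Fin n)) : Set (Fin n × Fin n) :=
  {p | ∃ u : Equiv.Perm (Fin n), bruhatLE v u ∧ bruhatLE u w ∧ u p.1 = p.2}

lemma bruhatLE_trans {n : ℕ} {a b c : Equiv.Perm (Fin n)} (h1 : bruhatLE a b)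
    (h2 : bruhatLE b c) : bruhatLE a c := fun i j => (h1 i j).trans (h2 i j)

/-- Multiplying on the right by a swap of positions `a < b` with `w b < w a`
decreases in Bruhat order. -/
lemma mul_swap_bruhatLE {n : ℕ} (w : Equiv.Perm (Fin n)) (a b : Fin n)
    (hab : a < b) (hw : w b < w a) : bruhatLE (w * Equiv.swap a b) w := by
  intro i j
  by_cases hb : b ≤ i
  · apply le_of_eq
    refine Finset.card_bij' (fun k _ => Equiv.swap a b k) (fun k _ => Equiv.swap a b k)
      ?_ ?_ ?_ ?_
    · intro k hk
      simp only [Finset.mem_filter, Finset.mem_univ, true_and, Equiv.Perm.mul_apply] at hk ⊢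
      obtain ⟨hk1, hk2⟩ := (Finset.mem_filter.1 hk).2
      refine ⟨?_, by simpa using hk2⟩
      rcases eq_or_ne k a with rfl | ha'
      · rw [Equiv.swap_apply_left]; exact hb
      rcases eq_or_ne k b with rfl | hb'
      · rw [Equiv.swap_apply_right]; exact (hab.le.trans hb)
      · rw [Equiv.swap_apply_of_ne_of_ne ha' hb']; exact hk1
    · intro k hk
      simp only [Finset.mem_filter, Finset.mem_univ, true_and, Equiv.Perm.mul_apply] at hk ⊢
      obtain ⟨hk1, hk2⟩ := hk
      refine Finset.mem_filter.2 ⟨Finset.mem_univ _, ?_, by simpa using hk2⟩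
      rcases eq_or_ne k a with rfl | ha'
      · rw [Equiv.swap_apply_left]; exact hb
      rcases eq_or_ne k b with rfl | hb'
      · rw [Equiv.swap_apply_right]; exact (hab.le.trans hb)
      · rw [Equiv.swap_apply_of_ne_of_ne ha' hb']; exact hk1
    · intro k _; simp
    · intro k _; simp
  · apply Finset.card_le_card
    intro k hk
    simp only [Finset.mem_filter, Finset.mem_univ, true_and, Equiv.Perm.mul_apply] at hk ⊢
    obtain ⟨hk1, hk2⟩ := (Finset.mem_filter.1 hk).2
    have hkb : k ≠ b := fun h => hb (h ▸ hk1)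
    refine ⟨hk1, ?_⟩
    rcases eq_or_ne k a with rfl | ha'
    · rw [Equiv.swap_apply_left] at hk2
      exact hk2.trans hw.le
    · rwa [Equiv.swap_apply_of_ne_of_ne ha' hkb] at hk2

/-- Count of positions with value `≤ j` is `j + 1`. -/
lemma card_filter_apply_le {n : ℕ} (v : Equiv.Perm (Fin n)) (j : Fin n) :
    (Finset.univ.filter fun k => v k ≤ j).card = j.val + 1 := by
  rw [← Fin.card_Iic j]
  refine Finset.card_bij' (fun k _ => v k) (fun k _ => v.symm k) ?_ ?_ ?_ ?_
  · intro k hk; simp only [Finset.mem_filter] at hk; simpa using hk.2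
  · intro k hk; simp only [Finset.mem_Iic] at hk; simp [hk]
  · intro k _; simp
  · intro k _; simp

theorem exists_le_iff_sandwiched_by_inversion {n : ℕ} (w : Equiv.Perm (Fin n))
    (i j : Fin n) (hij : j ≠ w i) :
    (∃ u : Equiv.Perm (Fin n), bruhatLE u w ∧ u i = j) ↔
      ∃ k l : Fin n, k < l ∧ w l < w k ∧ k ≤ i ∧ i ≤ l ∧ w l ≤ j ∧ j ≤ w k := by
  constructor
  · rintro ⟨u, hu, hui⟩
    -- existence of k ≤ i with j ≤ w k
    have hk : ∃ k : Fin n, k ≤ i ∧ j ≤ w k := by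
      have h1 : 0 < (Finset.univ.filter fun k => k ≤ i ∧ j ≤ u k).card := by
        refine Finset.card_pos.2 ⟨i, ?_⟩
        simp [hui]
      have h2 := hu i j
      obtain ⟨k, hk⟩ := Finset.card_pos.1 (lt_of_lt_of_le h1 h2)
      simp only [Finset.mem_filter, Finset.mem_univ, true_and] at hk
      exact ⟨k, hk⟩
    -- existence of l ≥ i with w l ≤ j
    have hl : ∃ l : Fin n, i ≤ l ∧ w l ≤ j := by
      by_contra hc
      push_neg at hc
      have hji : j < w i := hc i le_rfl
      have hi0 : 0 < i.val := by
        have hm : w.symm j < i := by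
          by_contra hm
          exact absurd (hc (w.symm j) (le_of_not_gt hm)) (by simp)
        exact lt_of_le_of_lt (Nat.zero_le _) hm
      have hj1 : j.val + 1 < n := lt_of_le_of_lt hji (w i).isLt
      set i' : Fin n := ⟨i.val - 1, by omega⟩ with hi'
      set j' : Fin n := ⟨j.val + 1, hj1⟩ with hj'
      -- complement counting identity
      have key : ∀ v : Equiv.Perm (Fin n),
          (Finset.univ.filter fun k => k ≤ i' ∧ j' ≤ v k).card +
            (Finset.univ.filter fun k => k ≤ i' ∧ v k < j').card = i'.val + 1 := by
        intro v
        have e1 : (Finset.univ.filter fun k => k ≤ i' ∧ j' ≤ v k) =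
            (Finset.univ.filter fun k => k ≤ i').filter (fun k => j' ≤ v k) := by
          rw [Finset.filter_filter]
        have e2 : (Finset.univ.filter fun k => k ≤ i' ∧ v k < j') =
            (Finset.univ.filter fun k => k ≤ i').filter (fun k => ¬ j' ≤ v k) := by
          rw [Finset.filter_filter]
          congr 1; ext k; simp [not_le]
        rw [e1, e2, Finset.card_filter_add_card_filter_not]
        have : (Finset.univ.filter fun k : Fin n => k ≤ i') = Finset.Iic i' := by
          ext k; simp
        rw [this, Fin.card_Iic]
      -- the w-set has card j+1
      have hA : (Finset.univ.filter fun k => k ≤ i' ∧ w k < j').card = j.val + 1 := by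
        rw [← card_filter_apply_le w j]
        congr 1
        ext k
        simp only [Finset.mem_filter, Finset.mem_univ, true_and, Fin.le_def, Fin.lt_def,
          hj', hi']
        constructor
        · rintro ⟨_, h2⟩
          omega
        · intro h
          have hki : k.val < i.val := by
            by_contra hk'
            exact absurd (hc k (Fin.le_def.2 (le_of_not_gt hk')))
              (not_lt.2 (Fin.le_def.2 h))
          omega
      -- the u-set has card ≤ j
      have hB : (Finset.univ.filter fun k => k ≤ i' ∧ u k < j').card ≤ j.val := by
        have hsub : (Finset.univ.filter fun k => k ≤ i' ∧ u k < j') ⊆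
            (Finset.univ.filter fun k => u k ≤ j).erase i := by
          intro k hk
          simp only [Finset.mem_filter, Finset.mem_univ, true_and, Finset.mem_erase] at hk ⊢
          obtain ⟨hk1, hk2⟩ := hk
          rw [Fin.le_def] at hk1
          refine ⟨fun h => ?_, ?_⟩
          · subst h; simp [hi'] at hk1; omega
          · rw [Fin.lt_def] at hk2; exact Fin.le_def.2 (by simp [hj'] at hk2; omega)
        calc (Finset.univ.filter fun k => k ≤ i' ∧ u k < j').card
            ≤ ((Finset.univ.filter fun k => u k ≤ j).erase i).card := Finset.card_le_card hsub
          _ = (Finset.univ.filter fun k => u k ≤ j).card - 1 :=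
              Finset.card_erase_of_mem (by simp [hui])
          _ = j.val := by rw [card_filter_apply_le]; omega
      have hR := hu i' j'
      have h1 := key u
      have h2 := key w
      omega
    obtain ⟨k, hk1, hk2⟩ := hk
    obtain ⟨l, hl1, hl2⟩ := hl
    have hkl : k ≠ l := by
      rintro rfl
      have : w k = j := le_antisymm (hl2) (hk2)
      have : k = i := le_antisymm hk1 hl1
      exact hij (by subst this; exact (le_antisymm hl2 hk2).symm)
    refine ⟨k, l, lt_of_le_of_ne (hk1.trans hl1) hkl, ?_, hk1, hl1, hl2, hk2⟩
    rcases lt_or_eq_of_le (hl2.trans hk2) with h | h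
    · exact h
    · exact absurd (w.injective h.symm) hkl
  · rintro ⟨k, l, hkl, hwlk, hki, hil, hlj, hjk⟩
    rcases lt_or_gt_of_ne hij with hj | hj
    · -- j < w i : use l
      set m := w.symm j with hm
      have hwm : w m = j := by simp [hm]
      by_cases him : i ≤ m
      · have him' : i < m := lt_of_le_of_ne him (fun h => hij (h ▸ hwm.symm))
        refine ⟨w * Equiv.swap i m, mul_swap_bruhatLE w i m him' (by rw [hwm]; exact hj), ?_⟩
        simp [Equiv.Perm.mul_apply, hwm]
      · push_neg at him
        -- m < i ≤ l, w l < j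
        have hml : w l < j := by
          rcases lt_or_eq_of_le hlj with h | h
          · exact h
          · exact absurd (w.injective (h.trans hwm.symm)) (fun he => absurd (he ▸ hil) (not_le.2 him))
        have hmli : m < l := lt_of_lt_of_le him hil
        have h1 : bruhatLE (w * Equiv.swap m l) w :=
          mul_swap_bruhatLE w m l hmli (by rw [hwm]; exact hml)
        rcases eq_or_ne i l with rfl | hil'
        · exact ⟨w * Equiv.swap m i, h1, by simp [Equiv.Perm.mul_apply, hwm]⟩
        · have hil'' : i < l := lt_of_le_of_ne hil hil'
          have hu1i : (w * Equiv.swap m l) i = w i := by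
            simp [Equiv.Perm.mul_apply, Equiv.swap_apply_of_ne_of_ne (ne_of_gt him) hil']
          have hu1l : (w * Equiv.swap m l) l = j := by
            simp [Equiv.Perm.mul_apply, hwm]
          have h2 : bruhatLE (w * Equiv.swap m l * Equiv.swap i l) (w * Equiv.swap m l) :=
            mul_swap_bruhatLE _ i l hil'' (by rw [hu1i, hu1l]; exact hj)
          refine ⟨_, bruhatLE_trans h2 h1, ?_⟩
          rw [Equiv.Perm.mul_apply, Equiv.swap_apply_left, hu1l]
    · -- w i < j : use k
      set m := w.symm j with hm
      have hwm : w m = j := by simp [hm]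
      by_cases him : m ≤ i
      · have him' : m < i := lt_of_le_of_ne him (fun h => hij (h ▸ hwm.symm))
        refine ⟨w * Equiv.swap m i, mul_swap_bruhatLE w m i him' (by rw [hwm]; exact hj), ?_⟩
        simp [Equiv.Perm.mul_apply, hwm]
      · push_neg at him
        -- k ≤ i < m, j < w k
        have hjk' : j < w k := by
          rcases lt_or_eq_of_le hjk with h | h
          · exact h
          · exact absurd (w.injective (hwm.trans h)) (fun he => absurd (he ▸ hki) (not_le.2 him))
        have hkm : k < m := lt_of_le_of_lt hki him
        have h1 : bruhatLE (w * Equiv.swap k m) w :=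
          mul_swap_bruhatLE w k m hkm (by rw [hwm]; exact hjk')
        rcases eq_or_ne i k with rfl | hik'
        · exact ⟨w * Equiv.swap i m, h1, by simp [Equiv.Perm.mul_apply, hwm]⟩
        · have hik'' : k < i := lt_of_le_of_ne hki (Ne.symm hik')
          have hu1i : (w * Equiv.swap k m) i = w i := by
            simp [Equiv.Perm.mul_apply, Equiv.swap_apply_of_ne_of_ne hik' (ne_of_lt him)]
          have hu1k : (w * Equiv.swap k m) k = j := by
            simp [Equiv.Perm.mul_apply, hwm]
          have h2 : bruhatLE (w * Equiv.swap k m * Equiv.swap k i) (w * Equiv.swap k m) :=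
            mul_swap_bruhatLE _ k i hik'' (by rw [hu1i, hu1k]; exact hj)
          refine ⟨_, bruhatLE_trans h2 h1, ?_⟩
          rw [Equiv.Perm.mul_apply, Equiv.swap_apply_right, hu1k]
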